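/- Convexity of total power in rates for superposition coding: the function (R_1,…,R_N) ↦ Σ_{i=1}^N s_i (e^{R_i} − 1) Π_{l=1}^{i−1} e^{R_l}, for s_1 > s_2 > … > s_N > 0 and R_i ≥ 0, is convex. Equivalently, rewriting via telescoping, it equals Σ_{i=1}^N (s_i − s_{i+1}) e^{Σ_{j=1}^i R_j} − s_1 (with s_{N+1}=0), which is convex as a nonnegative combination of exponentials of linear functions. -/

import Mathlib

open Finset

lemma convex_orthant : Convex ℝ {R : ℕ → ℝ | ∀ i, 0 ≤ R i} := by
  intro x hx y hy a b ha hb _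
  intro i
  exact add_nonneg (mul_nonneg ha (hx i)) (mul_nonneg hb (hy i))

lemma sum_convexOn {ι : Type*} (t : Finset ι) {S : Set (ℕ → ℝ)} (hS : Convex ℝ S)
    (f : ι → (ℕ → ℝ) → ℝ) (hf : ∀ i ∈ t, ConvexOn ℝ S (f i)) :
    ConvexOn ℝ S (fun x => ∑ i ∈ t, f i x) := by
  classical
  induction t using Finset.induction with
  | empty => simpa using convexOn_const 0 hS
  | @insert a tt hic ih =>
    simp only [Finset.sum_insert hic]
    exact (hf a (mem_insert_self a tt)).add (ih fun i hi => hf i (mem_insert_of_mem hi))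

lemma exp_sum_convexOn (i : ℕ) {S : Set (ℕ → ℝ)} (hS : Convex ℝ S) :
    ConvexOn ℝ S (fun R : ℕ → ℝ => Real.exp (∑ j ∈ range (i + 1), R j)) := by
  have hlin : ConvexOn ℝ (Set.univ : Set (ℕ → ℝ))
      (fun R : ℕ → ℝ => Real.exp (∑ j ∈ range (i + 1), R j)) := by
    have := convexOn_exp.comp_affineMap
      ((∑ j ∈ range (i + 1), LinearMap.proj (R := ℝ) (φ := fun _ : ℕ => ℝ) j).toAffineMap)
    simp only [Set.preimage_univ] at this
    convert this using 2 with R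
    · rfl
    · rfl
    · rfl
    · rfl
    simp [LinearMap.toAffineMap]
  exact hlin.subset (Set.subset_univ S) hS

lemma key_ident (s : ℕ → ℝ) (R : ℕ → ℝ) (M : ℕ) :
    ∑ i ∈ range M, s i * (Real.exp (R i) - 1) * ∏ l ∈ range i, Real.exp (R l) =
      ∑ i ∈ range M, (s i - s (i + 1)) * Real.exp (∑ j ∈ range (i + 1), R j)
        - s 0 + s M * Real.exp (∑ j ∈ range M, R j) := by
  induction M with
  | zero => simp
  | succ M ih =>
    rw [Finset.sum_range_succ, ih, Finset.sum_range_succ (f := fun i => (s i - s (i+1)) * Real.exp (∑ j ∈ range (i+1), R j))]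
    have h1 : ∏ l ∈ range M, Real.exp (R l) = Real.exp (∑ j ∈ range M, R j) := by
      rw [Real.exp_sum]
    rw [h1, Finset.sum_range_succ (f := R), Real.exp_add]
    ring

/-- Convexity of the total superposition-coding power as a function of the rates:
with `s 0 > s 1 > … > s (N-1) > 0` and `s N = 0` (playing the role of
`s_{N+1} = 0`), the function
`R ↦ ∑_{i<N} s i * (exp (R i) - 1) * ∏_{l<i} exp (R l)` is convex on the
nonnegative orthant, and equals
`∑_{i<N} (s i - s (i+1)) * exp (∑_{j ≤ i} R j) - s 0`. -/
theorem stmt_10 (N : ℕ) (s : ℕ → ℝ)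
    (hsN : s N = 0)
    (hdec : ∀ i j : ℕ, i < j → j ≤ N → s j < s i)
    (hpos : ∀ i : ℕ, i < N → 0 < s i) :
    ConvexOn ℝ {R : ℕ → ℝ | ∀ i, 0 ≤ R i}
      (fun R : ℕ → ℝ =>
        ∑ i ∈ range N, s i * (Real.exp (R i) - 1) *
          ∏ l ∈ range i, Real.exp (R l)) ∧
    (∀ R : ℕ → ℝ,
      ∑ i ∈ range N, s i * (Real.exp (R i) - 1) * ∏ l ∈ range i, Real.exp (R l) =
        ∑ i ∈ range N, (s i - s (i + 1)) * Real.exp (∑ j ∈ range (i + 1), R j)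
          - s 0) := by
  have hident : ∀ R : ℕ → ℝ,
      ∑ i ∈ range N, s i * (Real.exp (R i) - 1) * ∏ l ∈ range i, Real.exp (R l) =
        ∑ i ∈ range N, (s i - s (i + 1)) * Real.exp (∑ j ∈ range (i + 1), R j)
          - s 0 := by
    intro R
    rw [key_ident s R N, hsN]
    ring
  refine ⟨?_, hident⟩
  have hS := convex_orthant
  have hconv : ConvexOn ℝ {R : ℕ → ℝ | ∀ i, 0 ≤ R i}
      (fun R : ℕ → ℝ =>
        ∑ i ∈ range N, (s i - s (i + 1)) * Real.exp (∑ j ∈ range (i + 1), R j)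
          - s 0) := by
    refine ConvexOn.sub ?_ (concaveOn_const (s 0) hS)
    refine sum_convexOn (range N) hS _ fun i hi => ?_
    have hnn : 0 ≤ s i - s (i + 1) := by
      have := hdec i (i + 1) (Nat.lt_succ_self i) (Nat.succ_le_of_lt (mem_range.mp hi))
      linarith
    exact (exp_sum_convexOn i hS).smul hnn
  have : (fun R : ℕ → ℝ =>
        ∑ i ∈ range N, s i * (Real.exp (R i) - 1) * ∏ l ∈ range i, Real.exp (R l))
      = (fun R : ℕ → ℝ =>
        ∑ i ∈ range N, (s i - s (i + 1)) * Real.exp (∑ j ∈ range (i + 1), R j)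
          - s 0) := funext hident
  rw [this]
  exact hconv
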